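/- On a nondegenerate tetrahedron T, the sequence ℝ → P₂(T) → (P₁(T))³ → RT₀(T) → P₀(T) → 0 is exact, where the maps are: inclusion of constants, gradient, curl, divergence. That is: (i) ∇u=0 for u∈P₂(T) iff u is constant; (ii) v∈(P₁(T))³ satisfies curl v = 0 iff v = ∇u for some u∈P₂(T); (iii) w∈RT₀(T)={a+cx} satisfies div w = 0 iff w = curl v for some v∈(P₁(T))³; (iv) div maps RT₀(T) onto P₀(T) (constants). -/

import Mathlib

open Matrix

/-- Partial derivative in direction `j`. -/
noncomputable def pd (j : Fin 3) (f : (Fin 3 → ℝ) → ℝ) (x : Fin 3 → ℝ) : ℝ :=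
  fderiv ℝ f x (Pi.single j 1)

/-- Gradient of a scalar field. -/
noncomputable def grad3 (f : (Fin 3 → ℝ) → ℝ) (x : Fin 3 → ℝ) : Fin 3 → ℝ :=
  fun j => pd j f x

/-- Curl of a vector field. -/
noncomputable def curl3 (u : (Fin 3 → ℝ) → Fin 3 → ℝ) (x : Fin 3 → ℝ) : Fin 3 → ℝ :=
  ![pd 1 (fun y => u y 2) x - pd 2 (fun y => u y 1) x,
    pd 2 (fun y => u y 0) x - pd 0 (fun y => u y 2) x,
    pd 0 (fun y => u y 1) x - pd 1 (fun y => u y 0) x]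

/-- Divergence of a vector field. -/
noncomputable def div3 (u : (Fin 3 → ℝ) → Fin 3 → ℝ) (x : Fin 3 → ℝ) : ℝ :=
  ∑ j, pd j (fun y => u y j) x

/-- `u` is a vector field with affine (degree ≤ 1) components. -/
def isP1Vec (u : (Fin 3 → ℝ) → Fin 3 → ℝ) : Prop :=
  ∃ (a : Fin 3 → ℝ) (B : Matrix (Fin 3) (Fin 3) ℝ), ∀ x, u x = a + B.mulVec x

/-! ### Auxiliary lemmas -/

noncomputable def lin3 (M : Fin 3 → ℝ) : (Fin 3 → ℝ) →L[ℝ] ℝ :=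
  ∑ i, M i • ContinuousLinearMap.proj i

lemma lin3_apply (M v : Fin 3 → ℝ) : lin3 M v = ∑ i, M i * v i := by
  simp [lin3, ContinuousLinearMap.sum_apply]

lemma lin3_single (M : Fin 3 → ℝ) (j : Fin 3) : lin3 M (Pi.single j 1) = M j := by
  rw [lin3_apply]; simp [Pi.single_apply, Finset.sum_ite_eq']

lemma pd_eq {f : (Fin 3 → ℝ) → ℝ} {f' : (Fin 3 → ℝ) →L[ℝ] ℝ} {x : Fin 3 → ℝ}
    (h : HasFDerivAt f f' x) (j : Fin 3) : pd j f x = f' (Pi.single j 1) := by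
  rw [pd, h.fderiv]

lemma hasFDerivAt_affine (a : ℝ) (M : Fin 3 → ℝ) (x : Fin 3 → ℝ) :
    HasFDerivAt (fun y : Fin 3 → ℝ => a + ∑ i, M i * y i) (lin3 M) x := by
  have : (fun y : Fin 3 → ℝ => a + ∑ i, M i * y i) = fun y => a + lin3 M y := by
    funext y; rw [lin3_apply]
  rw [this]
  exact (lin3 M).hasFDerivAt.const_add a

lemma pd_affine (a : ℝ) (M : Fin 3 → ℝ) (j : Fin 3) (x : Fin 3 → ℝ) :
    pd j (fun y => a + ∑ i, M i * y i) x = M j := by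
  rw [pd_eq (hasFDerivAt_affine a M x), lin3_single]

lemma analyticP (p : MvPolynomial (Fin 3) ℝ) (x : Fin 3 → ℝ) :
    AnalyticAt ℝ (fun y => MvPolynomial.eval y p) x :=
  AnalyticOnNhd.eval_mvPolynomial p x trivial

lemma diffP (p : MvPolynomial (Fin 3) ℝ) :
    Differentiable ℝ (fun y : Fin 3 → ℝ => MvPolynomial.eval y p) :=
  fun x => (analyticP p x).differentiableAt

lemma hasFDerivAt_quad (a : Fin 3 → ℝ) (B : Matrix (Fin 3) (Fin 3) ℝ) (x : Fin 3 → ℝ) :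
    HasFDerivAt (fun y : Fin 3 → ℝ => (∑ j, a j * y j) + 2⁻¹ * ∑ i, ∑ j, B i j * (y i * y j))
      ((∑ j, a j • ContinuousLinearMap.proj j) +
        (2:ℝ)⁻¹ • ∑ i, ∑ j, B i j • (x i • (ContinuousLinearMap.proj j : (Fin 3 → ℝ) →L[ℝ] ℝ)
            + x j • ContinuousLinearMap.proj i)) x := by
  have hp : ∀ j : Fin 3, HasFDerivAt (fun y : Fin 3 → ℝ => y j)
      (ContinuousLinearMap.proj j : (Fin 3 → ℝ) →L[ℝ] ℝ) x := fun j => hasFDerivAt_apply j x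
  apply HasFDerivAt.add
  · exact HasFDerivAt.fun_sum fun j _ => (hp j).const_mul (a j)
  · exact (HasFDerivAt.fun_sum fun i _ => HasFDerivAt.fun_sum fun j _ =>
      ((hp i).mul (hp j)).const_mul (B i j)).const_mul 2⁻¹

lemma sum_mul_single (k : Fin 3) (f : Fin 3 → ℝ) :
    (∑ j, f j * (Pi.single k 1 : Fin 3 → ℝ) j) = f k := by
  simp [Pi.single_apply, mul_ite, Finset.sum_ite_eq']

lemma pd_quad (a : Fin 3 → ℝ) (B : Matrix (Fin 3) (Fin 3) ℝ)
    (hB : ∀ i j, B i j = B j i) (k : Fin 3) (x : Fin 3 → ℝ) :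
    pd k (fun y : Fin 3 → ℝ => (∑ j, a j * y j) + 2⁻¹ * ∑ i, ∑ j, B i j * (y i * y j)) x
      = a k + B.mulVec x k := by
  rw [pd, (hasFDerivAt_quad a B x).fderiv]
  simp only [ContinuousLinearMap.add_apply, ContinuousLinearMap.sum_apply,
    ContinuousLinearMap.smul_apply, ContinuousLinearMap.proj_apply, smul_eq_mul]
  have h2 : ∀ i : Fin 3,
      (∑ j, B i j * (x i * (Pi.single k 1 : Fin 3 → ℝ) j + x j * (Pi.single k 1 : Fin 3 → ℝ) i))
      = B i k * x i + (Pi.single k 1 : Fin 3 → ℝ) i * ∑ j, B i j * x j := by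
    intro i
    rw [Finset.sum_congr rfl (fun j _ => by
      show B i j * (x i * (Pi.single k 1 : Fin 3 → ℝ) j + x j * (Pi.single k 1 : Fin 3 → ℝ) i)
        = (B i j * x i) * (Pi.single k 1 : Fin 3 → ℝ) j
          + (Pi.single k 1 : Fin 3 → ℝ) i * (B i j * x j)
      ring)]
    rw [Finset.sum_add_distrib, ← Finset.mul_sum, sum_mul_single k (fun j => B i j * x i)]
  rw [sum_mul_single k a, Finset.sum_congr rfl (fun i _ => h2 i), Finset.sum_add_distrib,
    Finset.sum_congr rfl (fun i _ => mul_comm ((Pi.single k 1 : Fin 3 → ℝ) i) _),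
    sum_mul_single k (fun i => ∑ j, B i j * x j),
    Finset.sum_congr rfl (fun i _ => by rw [hB i k])]
  simp only [Matrix.mulVec, dotProduct]
  ring

open MvPolynomial in
noncomputable def quadPoly (a : Fin 3 → ℝ) (B : Matrix (Fin 3) (Fin 3) ℝ) :
    MvPolynomial (Fin 3) ℝ :=
  (∑ j, C (a j) * X j) + C 2⁻¹ * ∑ i, ∑ j, C (B i j) * (X i * X j)

lemma quadPoly_eval (a : Fin 3 → ℝ) (B : Matrix (Fin 3) (Fin 3) ℝ) (y : Fin 3 → ℝ) :
    MvPolynomial.eval y (quadPoly a B)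
      = (∑ j, a j * y j) + 2⁻¹ * ∑ i, ∑ j, B i j * (y i * y j) := by
  simp [quadPoly, mul_assoc]

lemma quadPoly_totalDegree (a : Fin 3 → ℝ) (B : Matrix (Fin 3) (Fin 3) ℝ) :
    (quadPoly a B).totalDegree ≤ 2 := by
  apply le_trans (MvPolynomial.totalDegree_add _ _)
  apply max_le
  · apply le_trans (MvPolynomial.totalDegree_finset_sum _ _)
    apply Finset.sup_le
    intro j _
    apply le_trans (MvPolynomial.totalDegree_mul _ _)
    simp [MvPolynomial.totalDegree_X]
  · apply le_trans (MvPolynomial.totalDegree_mul _ _)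
    simp only [MvPolynomial.totalDegree_C, zero_add]
    apply le_trans (MvPolynomial.totalDegree_finset_sum _ _)
    apply Finset.sup_le
    intro i _
    apply le_trans (MvPolynomial.totalDegree_finset_sum _ _)
    apply Finset.sup_le
    intro j _
    apply le_trans (MvPolynomial.totalDegree_mul _ _)
    simp only [MvPolynomial.totalDegree_C, zero_add]
    apply le_trans (MvPolynomial.totalDegree_mul _ _)
    simp [MvPolynomial.totalDegree_X]

lemma fderiv_eq_zero_of_pd (f : (Fin 3 → ℝ) → ℝ) (x : Fin 3 → ℝ)
    (h : ∀ j, pd j f x = 0) : fderiv ℝ f x = 0 := by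
  ext v
  have hv : v = ∑ j, v j • (Pi.single j 1 : Fin 3 → ℝ) := by
    funext i
    simp [Pi.single_apply, Finset.sum_ite_eq']
  rw [ContinuousLinearMap.zero_apply]
  conv_lhs => rw [hv]
  rw [map_sum]
  have : ∀ j : Fin 3, fderiv ℝ f x (v j • (Pi.single j 1 : Fin 3 → ℝ)) = 0 := fun j => by
    have hj := h j
    rw [pd] at hj
    rw [(fderiv ℝ f x).map_smul, hj]
    simp
  simp [this]

lemma const_of_grad_zero {s : Set (Fin 3 → ℝ)} (hs : Convex ℝ s) (ho : IsOpen s)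
    {f : (Fin 3 → ℝ) → ℝ} (hf : Differentiable ℝ f)
    (h : ∀ x ∈ s, fderiv ℝ f x = 0) {x y : Fin 3 → ℝ} (hx : x ∈ s) (hy : y ∈ s) :
    f x = f y := by
  have := hs.norm_image_sub_le_of_norm_fderivWithin_le (hf.differentiableOn) (C := 0)
    (fun z hz => by rw [fderivWithin_of_isOpen ho hz, h z hz]; simp) hy hx
  have h0 : ‖f x - f y‖ ≤ 0 := by simpa using this
  have := le_antisymm h0 (norm_nonneg _)
  rwa [norm_eq_zero, sub_eq_zero] at this

lemma B_symm_of_grad (p : MvPolynomial (Fin 3) ℝ) (a' : Fin 3 → ℝ)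
    (B : Matrix (Fin 3) (Fin 3) ℝ) {s : Set (Fin 3 → ℝ)} (ho : IsOpen s)
    {x₀ : Fin 3 → ℝ} (hx₀ : x₀ ∈ s)
    (hg : ∀ y ∈ s, ∀ j, fderiv ℝ (fun z => MvPolynomial.eval z p) y (Pi.single j 1)
      = a' j + ∑ k, B j k * y k) (i j : Fin 3) : B i j = B j i := by
  set P : (Fin 3 → ℝ) → ℝ := fun z => MvPolynomial.eval z p with hP
  have hC : ContDiffAt ℝ 2 P x₀ := (analyticP p x₀).contDiffAt
  have hsymm : IsSymmSndFDerivAt ℝ P x₀ := hC.isSymmSndFDerivAt (by norm_num)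
  have hd : DifferentiableAt ℝ (fderiv ℝ P) x₀ :=
    (hC.fderiv_right (m := 1) (by norm_num)).differentiableAt (by norm_num)
  have key : ∀ m l : Fin 3,
      fderiv ℝ (fderiv ℝ P) x₀ (Pi.single m 1) (Pi.single l 1) = B l m := by
    intro m l
    have hcomp : HasFDerivAt (fun y => fderiv ℝ P y (Pi.single l 1))
        ((ContinuousLinearMap.apply ℝ ℝ ((Pi.single l 1 : Fin 3 → ℝ))).comp
          (fderiv ℝ (fderiv ℝ P) x₀)) x₀ :=
      (ContinuousLinearMap.apply ℝ ℝ ((Pi.single l 1 : Fin 3 → ℝ))).hasFDerivAt.comp x₀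
        hd.hasFDerivAt
    have heq : (fun y => fderiv ℝ P y (Pi.single l 1))
        =ᶠ[nhds x₀] (fun y => a' l + ∑ k, B l k * y k) :=
      Filter.eventually_of_mem (ho.mem_nhds hx₀) (fun y hy => hg y hy l)
    have h1 : fderiv ℝ (fun y => fderiv ℝ P y (Pi.single l 1)) x₀ = lin3 (fun k => B l k) := by
      rw [heq.fderiv_eq, (hasFDerivAt_affine (a' l) (fun k => B l k) x₀).fderiv]
    have h2 : fderiv ℝ (fun y => fderiv ℝ P y (Pi.single l 1)) x₀
        = (ContinuousLinearMap.apply ℝ ℝ ((Pi.single l 1 : Fin 3 → ℝ))).comp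
          (fderiv ℝ (fderiv ℝ P) x₀) := hcomp.fderiv
    have := congrArg (fun L => L ((Pi.single m 1 : Fin 3 → ℝ))) (h2.symm.trans h1)
    simpa [lin3_single] using this
  have := hsymm.eq (Pi.single i 1) (Pi.single j 1)
  rw [key i j, key j i] at this
  exact this.symm

lemma comp_affine (a : Fin 3 → ℝ) (B : Matrix (Fin 3) (Fin 3) ℝ) (i : Fin 3) :
    (fun y : Fin 3 → ℝ => (a + B.mulVec y) i) = fun y => a i + ∑ k, B i k * y k := by
  funext y; simp [Matrix.mulVec, dotProduct]

lemma pd_comp_affine (a : Fin 3 → ℝ) (B : Matrix (Fin 3) (Fin 3) ℝ) (i j : Fin 3)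
    (x : Fin 3 → ℝ) : pd j (fun y => (a + B.mulVec y) i) x = B i j := by
  rw [comp_affine]
  exact pd_affine (a i) (fun k => B i k) j x

lemma curl3_affine {u : (Fin 3 → ℝ) → Fin 3 → ℝ} {a : Fin 3 → ℝ}
    {B : Matrix (Fin 3) (Fin 3) ℝ} (hu : ∀ x, u x = a + B.mulVec x) (x : Fin 3 → ℝ) :
    curl3 u x = ![B 2 1 - B 1 2, B 0 2 - B 2 0, B 1 0 - B 0 1] := by
  have hc : ∀ i : Fin 3, (fun y => u y i) = (fun y => (a + B.mulVec y) i) := by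
    intro i; funext y; rw [hu y]
  rw [curl3, hc 0, hc 1, hc 2]
  rw [pd_comp_affine, pd_comp_affine, pd_comp_affine, pd_comp_affine, pd_comp_affine,
    pd_comp_affine]

lemma pd_RT (a : Fin 3 → ℝ) (c : ℝ) (j : Fin 3) (x : Fin 3 → ℝ) :
    pd j (fun y => (a + c • y) j) x = c := by
  have : (fun y : Fin 3 → ℝ => (a + c • y) j)
      = fun y => a j + ∑ i, (Pi.single j c : Fin 3 → ℝ) i * y i := by
    funext y
    simp [Pi.single_apply, ite_mul, Finset.sum_ite_eq]
  rw [this, pd_affine]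
  simp

lemma div3_RT (a : Fin 3 → ℝ) (c : ℝ) (x : Fin 3 → ℝ) :
    div3 (fun y => a + c • y) x = 3 * c := by
  rw [div3]
  rw [Finset.sum_congr rfl (fun j _ => pd_RT a c j x)]
  simp [Finset.sum_const, mul_comm]

theorem stmt13 (vt : Fin 4 → Fin 3 → ℝ) (hvt : AffineIndependent ℝ vt)
    (T : Set (Fin 3 → ℝ)) (hT : T = interior (convexHull ℝ (Set.range vt))) :
    -- (i) exactness at P₂: the kernel of ∇ is the constants
    (∀ p : MvPolynomial (Fin 3) ℝ, p.totalDegree ≤ 2 →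
      ((∀ x ∈ T, grad3 (fun y => MvPolynomial.eval y p) x = 0) ↔
        ∃ c : ℝ, ∀ x ∈ T, MvPolynomial.eval x p = c)) ∧
    -- (ii) exactness at (P₁)³: curl-free affine fields are gradients of P₂
    (∀ u, isP1Vec u →
      ((∀ x ∈ T, curl3 u x = 0) ↔
        ∃ p : MvPolynomial (Fin 3) ℝ, p.totalDegree ≤ 2 ∧
          ∀ x ∈ T, u x = grad3 (fun y => MvPolynomial.eval y p) x)) ∧
    -- (iii) exactness at RT₀: divergence-free RT₀ fields are curls of (P₁)³ fields
    (∀ (a : Fin 3 → ℝ) (c : ℝ),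
      ((∀ x ∈ T, div3 (fun y => a + c • y) x = 0) ↔
        ∃ u, isP1Vec u ∧ ∀ x ∈ T, a + c • x = curl3 u x)) ∧
    -- (iv) divergence maps RT₀ onto the constants P₀
    (∀ k : ℝ, ∃ (a : Fin 3 → ℝ) (c : ℝ),
      ∀ x ∈ T, div3 (fun y => a + c • y) x = k) := by
  obtain ⟨hTo, hTconv, hTne⟩ : IsOpen T ∧ Convex ℝ T ∧ T.Nonempty := by
    subst hT
    refine ⟨isOpen_interior, (convex_convexHull ℝ _).interior, ?_⟩
    rw [(convex_convexHull ℝ _).interior_nonempty_iff_affineSpan_eq_top, affineSpan_convexHull,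
      hvt.affineSpan_eq_top_iff_card_eq_finrank_add_one]
    simp
  obtain ⟨x₀, hx₀⟩ := hTne
  refine ⟨?_, ?_, ?_, ?_⟩
  -- (i)
  · intro p _hdeg
    constructor
    · intro hg
      refine ⟨MvPolynomial.eval x₀ p, fun x hx => ?_⟩
      exact const_of_grad_zero hTconv hTo (diffP p)
        (fun z hz => fderiv_eq_zero_of_pd _ z (fun j => congrFun (hg z hz) j)) hx hx₀
    · rintro ⟨c, hc⟩ x hx
      funext j
      have heq : (fun y => MvPolynomial.eval y p) =ᶠ[nhds x] (fun _ => c) :=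
        Filter.eventually_of_mem (hTo.mem_nhds hx) hc
      show pd j (fun y => MvPolynomial.eval y p) x = 0
      rw [pd, heq.fderiv_eq]
      simp
  -- (ii)
  · rintro u ⟨a, B, hu⟩
    constructor
    · intro hcurl
      have h0 := (curl3_affine hu x₀).symm.trans (hcurl x₀ hx₀)
      have e0 : B 2 1 - B 1 2 = 0 := by simpa using congrFun h0 0
      have e1 : B 0 2 - B 2 0 = 0 := by simpa using congrFun h0 1
      have e2 : B 1 0 - B 0 1 = 0 := by simpa using congrFun h0 2
      have hB : ∀ i j, B i j = B j i := by
        intro i j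
        fin_cases i <;> fin_cases j <;>
          first
            | rfl
            | exact (sub_eq_zero.1 e0) | exact (sub_eq_zero.1 e0).symm
            | exact (sub_eq_zero.1 e1) | exact (sub_eq_zero.1 e1).symm
            | exact (sub_eq_zero.1 e2) | exact (sub_eq_zero.1 e2).symm
      refine ⟨quadPoly a B, quadPoly_totalDegree a B, fun x hx => ?_⟩
      have hfun : (fun y => MvPolynomial.eval y (quadPoly a B))
          = fun y : Fin 3 → ℝ => (∑ j, a j * y j) + 2⁻¹ * ∑ i, ∑ j, B i j * (y i * y j) := by
        funext y; exact quadPoly_eval a B y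
      funext j
      show u x j = pd j (fun y => MvPolynomial.eval y (quadPoly a B)) x
      rw [hfun, pd_quad a B hB j x, hu x]
      simp
    · rintro ⟨p, _hdeg, hup⟩ x hx
      have hg : ∀ y ∈ T, ∀ j, fderiv ℝ (fun z => MvPolynomial.eval z p) y (Pi.single j 1)
          = a j + ∑ k, B j k * y k := by
        intro y hy j
        have h := congrFun (hup y hy) j
        rw [hu y] at h
        rw [show fderiv ℝ (fun z => MvPolynomial.eval z p) y (Pi.single j 1)
            = grad3 (fun z => MvPolynomial.eval z p) y j from rfl, ← h]
        simp [Matrix.mulVec, dotProduct]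
      have hB : ∀ i j, B i j = B j i := fun i j => B_symm_of_grad p a B hTo hx₀ hg i j
      rw [curl3_affine hu x]
      funext i
      fin_cases i <;> simp [sub_eq_zero] <;>
        first | exact hB 2 1 | exact hB 0 2 | exact hB 1 0
  -- (iii)
  · intro a c
    constructor
    · intro hdiv
      have hc : c = 0 := by
        have := (div3_RT a c x₀).symm.trans (hdiv x₀ hx₀)
        linarith
      refine ⟨fun y => (0 : Fin 3 → ℝ)
          + (Matrix.of ![![0, 0, a 1], ![a 2, 0, 0], ![0, a 0, 0]]).mulVec y,
        ⟨0, _, fun x => rfl⟩, fun x hx => ?_⟩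
      rw [curl3_affine (fun x => rfl) x]
      subst hc
      funext i
      fin_cases i <;> simp [Matrix.of_apply]
    · rintro ⟨u, ⟨a', B, hu⟩, hcu⟩ x hx
      have hconst : ∀ y ∈ T, a + c • y = ![B 2 1 - B 1 2, B 0 2 - B 2 0, B 1 0 - B 0 1] := by
        intro y hy; rw [hcu y hy, curl3_affine hu y]
      have hc : c = 0 := by
        obtain ⟨ε, hε, hball⟩ := Metric.isOpen_iff.1 hTo x₀ hx₀
        set y := x₀ + (ε/2) • (Pi.single 0 1 : Fin 3 → ℝ) with hy
        have hymem : y ∈ T := by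
          apply hball
          have hn : ‖(ε/2) • (Pi.single 0 1 : Fin 3 → ℝ)‖ = ε/2 := by
            rw [norm_smul, Pi.norm_single, norm_one, mul_one, Real.norm_eq_abs,
              abs_of_pos (by linarith)]
          rw [Metric.mem_ball, dist_eq_norm, hy, add_sub_cancel_left, hn]
          linarith
        have h1 := congrFun (hconst x₀ hx₀) 0
        have h2 := congrFun (hconst y hymem) 0
        simp only [hy, Pi.add_apply, Pi.smul_apply, smul_eq_mul, Pi.single_eq_same, mul_one,
          Matrix.cons_val_zero] at h1 h2
        have hce : c * (ε / 2) = 0 := by linear_combination h2 - h1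
        rcases mul_eq_zero.1 hce with h | h
        · exact h
        · linarith
      rw [div3_RT, hc]
      ring
  -- (iv)
  · intro k
    exact ⟨0, k / 3, fun x hx => by rw [div3_RT]; ring⟩
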